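/- For a > b > 0, the composite divided difference ∂₀∂₁'∂₀ applied to Q̃_{a,b}(x₁,...,x_n) equals Q̃_{a-2}(X'')Q̃_{b-1}(X'') - Q̃_{a-1}(X'')Q̃_{b-2}(X''), where X'' = (x₃,...,x_n). -/

import Mathlib

open MvPolynomial

/-- The `i`-th elementary symmetric polynomial in the variables `{X j : j ∈ S}`,
i.e. `Q̃_i` on the variable set `S`. -/
noncomputable def Qt (S : Finset ℕ) (i : ℕ) : MvPolynomial ℕ ℤ :=
  ∑ t ∈ Finset.powersetCard i S, ∏ j ∈ t, X j

/-- The two-row `Q̃`-polynomial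
`Q̃_{i,j} = Q̃_i Q̃_j + 2 ∑_{k=1}^{j} (-1)^k Q̃_{i+k} Q̃_{j-k}` (for `i ≥ j`). -/
noncomputable def Qtp (S : Finset ℕ) (i j : ℕ) : MvPolynomial ℕ ℤ :=
  Qt S i * Qt S j +
    2 * ∑ k ∈ Finset.Icc 1 j, (-1 : MvPolynomial ℕ ℤ) ^ k * Qt S (i + k) * Qt S (j - k)

/-- Fuel-based Laplace (Pfaffian) recursion for `Q̃_λ` on a list of parts of even
length: `Q̃_ν = ∑_{j} (-1)^{j-1} Q̃_{ν_j,ν_r} Q̃_{ν∖{ν_j,ν_r}}`. -/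
noncomputable def Qpf (S : Finset ℕ) : ℕ → List ℕ → MvPolynomial ℕ ℤ
  | 0, _ => 1
  | fuel + 1, l =>
    if l.length < 2 then 1
    else
      ∑ j ∈ Finset.range (l.length - 1),
        (-1 : MvPolynomial ℕ ℤ) ^ j * Qtp S (l.getD j 0) (l.getLast?.getD 0) *
          Qpf S fuel (l.dropLast.eraseIdx j)

/-- `Q̃_λ` for a partition `λ` (list of parts), padding with a zero part
to make the length even. -/
noncomputable def Qlam (S : Finset ℕ) (l : List ℕ) : MvPolynomial ℕ ℤ :=
  Qpf S (l.length + 1) (if Even l.length then l else l ++ [0])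

/-- `Q̃_i` with integer index, vanishing for `i < 0`. -/
noncomputable def QtZ (S : Finset ℕ) (i : ℤ) : MvPolynomial ℕ ℤ :=
  if 0 ≤ i then Qt S i.toNat else 0

/-- `Q̃_{i,j}` with integer indices (`i ≥ j`), vanishing when an index is negative. -/
noncomputable def QtpZ (S : Finset ℕ) (i j : ℤ) : MvPolynomial ℕ ℤ :=
  QtZ S i * QtZ S j +
    2 * ∑ k ∈ Finset.Icc 1 j.toNat,
      (-1 : MvPolynomial ℕ ℤ) ^ k * QtZ S (i + k) * QtZ S (j - k)

/-- The operator `s₀`, replacing `x₁ = X 0` by `-x₁`. -/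
noncomputable def s0 : MvPolynomial ℕ ℤ →+* MvPolynomial ℕ ℤ :=
  (MvPolynomial.bind₁ fun j => if j = 0 then -(X 0 : MvPolynomial ℕ ℤ) else X j).toRingHom

/-- The operator `s₁`, swapping `x₁ = X 0` and `x₂ = X 1`. -/
noncomputable def s1 : MvPolynomial ℕ ℤ →+* MvPolynomial ℕ ℤ :=
  (MvPolynomial.bind₁ fun j =>
    if j = 0 then (X 1 : MvPolynomial ℕ ℤ) else if j = 1 then X 0 else X j).toRingHom

lemma Qt_zero (S : Finset ℕ) : Qt S 0 = 1 := by
  simp [Qt]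

lemma Qt_insert {j : ℕ} {S : Finset ℕ} (hj : j ∉ S) (i : ℕ) :
    Qt (insert j S) (i + 1) = Qt S (i + 1) + X j * Qt S i := by
  classical
  unfold Qt
  rw [Finset.powersetCard_succ_insert hj, Finset.sum_union, Finset.sum_image, Finset.mul_sum]
  · congr 1
    refine Finset.sum_congr rfl fun t ht => ?_
    have hjt : j ∉ t := fun h => hj ((Finset.mem_powersetCard.1 ht).1 h)
    rw [Finset.prod_insert hjt]
  · intro t ht u hu htu
    have hjt : j ∉ t := fun h => hj ((Finset.mem_powersetCard.1 ht).1 h)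
    have hju : j ∉ u := fun h => hj ((Finset.mem_powersetCard.1 hu).1 h)
    rw [← Finset.erase_insert hjt, ← Finset.erase_insert hju, htu]
  · rw [Finset.disjoint_right]
    intro t ht ht'
    obtain ⟨u, hu, rfl⟩ := Finset.mem_image.1 ht
    exact hj ((Finset.mem_powersetCard.1 ht').1 (Finset.mem_insert_self j u))

lemma QtZ_neg {S : Finset ℕ} {i : ℤ} (hi : i < 0) : QtZ S i = 0 := by
  simp [QtZ, not_le.2 hi]

lemma QtZ_insert {j : ℕ} {S : Finset ℕ} (hj : j ∉ S) (i : ℤ) :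
    QtZ (insert j S) i = QtZ S i + X j * QtZ S (i - 1) := by
  by_cases h1 : 1 ≤ i
  · obtain ⟨m, rfl⟩ : ∃ m : ℕ, i = (m : ℤ) + 1 := ⟨(i - 1).toNat, by omega⟩
    have e1 : ((m : ℤ) + 1).toNat = m + 1 := by omega
    have e2 : ((m : ℤ) + 1 - 1).toNat = m := by omega
    simp only [QtZ, if_pos (by omega : (0:ℤ) ≤ (m:ℤ) + 1),
      if_pos (by omega : (0:ℤ) ≤ (m:ℤ) + 1 - 1), e1, e2]
    exact Qt_insert hj m
  · by_cases h0 : i = 0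
    · subst h0
      simp [QtZ, Qt_zero, QtZ_neg]
    · rw [QtZ_neg (by omega), QtZ_neg (by omega), QtZ_neg (by omega)]
      ring

lemma s0_X_ne {j : ℕ} (hj : j ≠ 0) : s0 (X j) = X j := by
  simp [s0, hj]

lemma s0_X0 : s0 (X 0) = -X 0 := by simp [s0]

lemma s1_X1 : s1 (X 1) = X 0 := by simp [s1]

lemma s1_X_ne {j : ℕ} (h0 : j ≠ 0) (h1 : j ≠ 1) : s1 (X j) = X j := by
  simp [s1, h0, h1]

lemma s0_Qt {S : Finset ℕ} (h : 0 ∉ S) (i : ℕ) : s0 (Qt S i) = Qt S i := by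
  unfold Qt
  rw [map_sum]
  refine Finset.sum_congr rfl fun t ht => ?_
  rw [map_prod]
  refine Finset.prod_congr rfl fun j hjt => ?_
  exact s0_X_ne fun hj => h (hj ▸ (Finset.mem_powersetCard.1 ht).1 hjt)

lemma s1_Qt {S : Finset ℕ} (h0 : 0 ∉ S) (h1 : 1 ∉ S) (i : ℕ) : s1 (Qt S i) = Qt S i := by
  unfold Qt
  rw [map_sum]
  refine Finset.sum_congr rfl fun t ht => ?_
  rw [map_prod]
  refine Finset.prod_congr rfl fun j hjt => ?_
  exact s1_X_ne (fun hj => h0 (hj ▸ (Finset.mem_powersetCard.1 ht).1 hjt))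
    (fun hj => h1 (hj ▸ (Finset.mem_powersetCard.1 ht).1 hjt))

lemma s0_QtZ {S : Finset ℕ} (h : 0 ∉ S) (i : ℤ) : s0 (QtZ S i) = QtZ S i := by
  unfold QtZ; split
  · exact s0_Qt h _
  · exact map_zero _

lemma s1_QtZ {S : Finset ℕ} (h0 : 0 ∉ S) (h1 : 1 ∉ S) (i : ℤ) : s1 (QtZ S i) = QtZ S i := by
  unfold QtZ; split
  · exact s1_Qt h0 h1 _
  · exact map_zero _

lemma telescope (T : ℕ → MvPolynomial ℕ ℤ) (N : ℕ) :
    ∑ k ∈ Finset.Icc 1 N, (T k - T (k - 1)) = T N - T 0 := by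
  induction N with
  | zero => simp
  | succ N ih => rw [Finset.sum_Icc_succ_top (by omega), ih]; simp only [Nat.add_sub_cancel]; ring

/-- `∂₀∂₁'∂₀(Q̃_{a,b}) = Q̃_{a-2}(X'')Q̃_{b-1}(X'') - Q̃_{a-1}(X'')Q̃_{b-2}(X'')`
for `a > b > 0`, where `X'' = (x₃,…,x_n)`.  The divided differences
`∂₀(f) = (f - s₀f)/(2x₁)` and `∂₁'(f) = (f - s₁f)/(x₂ - x₁)` are encoded by
the (unique) quotients `g₁, g₂, g₃`. -/
theorem Cdoubleprime_pair_formula (n : ℕ) (hn : 2 ≤ n) (a b : ℤ) (hb : 0 < b) (hab : b < a)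
    (g1 g2 g3 : MvPolynomial ℕ ℤ)
    (h1 : QtpZ (Finset.range n) a b - s0 (QtpZ (Finset.range n) a b) = 2 * X 0 * g1)
    (h2 : g1 - s1 g1 = (X 1 - X 0) * g2)
    (h3 : g2 - s0 g2 = 2 * X 0 * g3) :
    g3 = QtZ (Finset.Ico 2 n) (a - 2) * QtZ (Finset.Ico 2 n) (b - 1)
        - QtZ (Finset.Ico 2 n) (a - 1) * QtZ (Finset.Ico 2 n) (b - 2) := by
  have h0S' : (0:ℕ) ∉ Finset.Ico 1 n := by simp
  have h0S'' : (0:ℕ) ∉ Finset.Ico 2 n := by simp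
  have h1S'' : (1:ℕ) ∉ Finset.Ico 2 n := by simp
  have hSplit : Finset.range n = insert 0 (Finset.Ico 1 n) := by
    ext x; simp only [Finset.mem_range, Finset.mem_insert, Finset.mem_Ico]; omega
  have hSplit' : Finset.Ico 1 n = insert 1 (Finset.Ico 2 n) := by
    ext x; simp only [Finset.mem_insert, Finset.mem_Ico]; omega
  set E : ℤ → MvPolynomial ℕ ℤ := fun i => QtZ (Finset.Ico 1 n) i with hEdef
  set U : ℤ → MvPolynomial ℕ ℤ := fun i => QtZ (Finset.Ico 2 n) i with hUdef
  have hQ : ∀ i : ℤ, QtZ (Finset.range n) i = E i + X 0 * E (i - 1) := fun i => by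
    rw [hSplit]; exact QtZ_insert h0S' i
  have hE : ∀ i : ℤ, E i = U i + X 1 * U (i - 1) := fun i => by
    simp only [hEdef, hUdef]; rw [hSplit']; exact QtZ_insert h1S'' i
  have hs0E : ∀ i : ℤ, s0 (E i) = E i := fun i => s0_QtZ h0S' i
  have hs0U : ∀ i : ℤ, s0 (U i) = U i := fun i => s0_QtZ h0S'' i
  have hs1U : ∀ i : ℤ, s1 (U i) = U i := fun i => s1_QtZ h0S'' h1S'' i
  have hs0Q : ∀ i : ℤ, s0 (QtZ (Finset.range n) i) = E i - X 0 * E (i - 1) := fun i => by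
    rw [hQ i, map_add, map_mul, s0_X0, hs0E, hs0E]; ring
  have hs1E : ∀ i : ℤ, s1 (E i) = U i + X 0 * U (i - 1) := fun i => by
    rw [hE i, map_add, map_mul, s1_X1, hs1U, hs1U]
  have h2X0 : (2 * X 0 : MvPolynomial ℕ ℤ) ≠ 0 :=
    mul_ne_zero (by norm_num) (X_ne_zero 0)
  have hX10 : (X 1 - X 0 : MvPolynomial ℕ ℤ) ≠ 0 :=
    sub_ne_zero_of_ne (fun h => one_ne_zero (X_injective h))
  -- Step 1
  have term : ∀ k ∈ Finset.Icc 1 b.toNat,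
      (-1 : MvPolynomial ℕ ℤ) ^ k * QtZ (Finset.range n) (a + k) * QtZ (Finset.range n) (b - k)
        - (-1 : MvPolynomial ℕ ℤ) ^ k * s0 (QtZ (Finset.range n) (a + k)) *
            s0 (QtZ (Finset.range n) (b - k))
      = 2 * X 0 * ((-1 : MvPolynomial ℕ ℤ) ^ k *
          (E (a + k) * E (b - k - 1) + E (a + k - 1) * E (b - k))) := by
    intro k _
    rw [hs0Q, hs0Q, hQ, hQ]
    ring
  have sum1 : ∑ k ∈ Finset.Icc 1 b.toNat, ((-1 : MvPolynomial ℕ ℤ) ^ k *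
        (E (a + k) * E (b - k - 1) + E (a + k - 1) * E (b - k)))
      = -(E a * E (b - 1)) := by
    have hcongr : ∀ k ∈ Finset.Icc 1 b.toNat,
        (-1 : MvPolynomial ℕ ℤ) ^ k *
          (E (a + k) * E (b - k - 1) + E (a + k - 1) * E (b - k))
        = (fun k : ℕ => (-1 : MvPolynomial ℕ ℤ) ^ k * (E (a + k) * E (b - k - 1))) k
          - (fun k : ℕ => (-1 : MvPolynomial ℕ ℤ) ^ k * (E (a + k) * E (b - k - 1))) (k - 1) := by
      intro k hk
      have hk1 : 1 ≤ k := (Finset.mem_Icc.1 hk).1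
      obtain ⟨m, rfl⟩ : ∃ m, k = m + 1 := ⟨k - 1, by omega⟩
      simp only [Nat.add_sub_cancel]
      rw [show a + ((m + 1 : ℕ) : ℤ) - 1 = a + (m : ℤ) from by push_cast; ring,
        show b - ((m + 1 : ℕ) : ℤ) = b - (m : ℤ) - 1 from by push_cast; ring, pow_succ]
      ring
    rw [Finset.sum_congr rfl hcongr, telescope]
    have hz : E (b - (b.toNat : ℤ) - 1) = 0 := by
      simp only [hEdef]; exact QtZ_neg (by omega)
    rw [hz]
    simp only [Nat.cast_zero, add_zero, sub_zero, pow_zero, one_mul, mul_zero, zero_sub]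
  have step1 : QtpZ (Finset.range n) a b - s0 (QtpZ (Finset.range n) a b)
      = 2 * X 0 * (E (a - 1) * E b - E a * E (b - 1)) := by
    simp only [QtpZ, map_add, map_mul, map_sum, map_pow, map_neg, map_one, map_ofNat]
    have expand : ∑ k ∈ Finset.Icc 1 b.toNat,
          ((-1 : MvPolynomial ℕ ℤ) ^ k * QtZ (Finset.range n) (a + k) *
            QtZ (Finset.range n) (b - k))
        - ∑ k ∈ Finset.Icc 1 b.toNat,
          ((-1 : MvPolynomial ℕ ℤ) ^ k * s0 (QtZ (Finset.range n) (a + k)) *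
            s0 (QtZ (Finset.range n) (b - k)))
        = 2 * X 0 * -(E a * E (b - 1)) := by
      rw [← Finset.sum_sub_distrib, Finset.sum_congr rfl term, ← Finset.mul_sum, sum1]
    rw [hs0Q a, hs0Q b, hQ a, hQ b]
    linear_combination (2 : MvPolynomial ℕ ℤ) * expand
  have hg1 : g1 = E (a - 1) * E b - E a * E (b - 1) :=
    mul_left_cancel₀ h2X0 (h1.symm.trans step1)
  -- Step 2
  have step2 : g1 - s1 g1 = (X 1 - X 0) *
      ((U (a - 2) * U b - U a * U (b - 2)) +
        (X 1 + X 0) * (U (a - 2) * U (b - 1) - U (a - 1) * U (b - 2))) := by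
    rw [hg1, map_sub, map_mul, map_mul, hs1E, hs1E, hs1E, hs1E,
      hE (a - 1), hE a, hE b, hE (b - 1)]
    rw [show a - 1 - 1 = a - 2 from by ring, show b - 1 - 1 = b - 2 from by ring]
    ring
  have hg2 : g2 = (U (a - 2) * U b - U a * U (b - 2)) +
      (X 1 + X 0) * (U (a - 2) * U (b - 1) - U (a - 1) * U (b - 2)) :=
    mul_left_cancel₀ hX10 (h2.symm.trans step2)
  -- Step 3
  have step3 : g2 - s0 g2 = 2 * X 0 * (U (a - 2) * U (b - 1) - U (a - 1) * U (b - 2)) := by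
    rw [hg2]
    simp only [map_add, map_sub, map_mul, hs0U, s0_X0, s0_X_ne one_ne_zero]
    ring
  exact mul_left_cancel₀ h2X0 (h3.symm.trans step3)
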